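/- Let (X,d) be a metric space, let p ≥ 1 be a real number, and let k ≥ 1 be an integer. Then for all finitely supported probability measures μ, ν on X, W_p^p(μ,ν) ≤ 3^{p−1}·OT^L(μ,ν); equivalently, W_p(μ,ν) ≤ 3^{1−1/p}·W_p^L(μ,ν), so the p-Wasserstein distance is bounded above by a constant multiple of the latent Wasserstein discrepancy. -/

import Mathlib

open scoped BigOperators

/-- A finitely supported probability measure on `X`, given by its weight
function (nonnegative, finite support, total mass one). -/
structure FinProb (X : Type*) where
  w : X → ℝ
  nonneg : ∀ x, 0 ≤ w x
  finite : (Function.support w).Finite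
  total : ∑ᶠ x, w x = 1

variable {X : Type*} [MetricSpace X]

/-- `P` is a coupling of `α` and `β`: entrywise nonnegative, finitely
supported, with row marginals `α` and column marginals `β`. -/
def IsCoupling (α β : FinProb X) (P : X → X → ℝ) : Prop :=
  (∀ x y, 0 ≤ P x y) ∧ (Function.support (Function.uncurry P)).Finite ∧
  (∀ x, ∑ᶠ y, P x y = α.w x) ∧ (∀ y, ∑ᶠ x, P x y = β.w y)

/-- The transport cost `Σ_{x,y} d(x,y)^p · P x y` of a plan `P` (real exponent `p`). -/
noncomputable def transportCost (p : ℝ) (P : X → X → ℝ) : ℝ :=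
  ∑ᶠ x, ∑ᶠ y, dist x y ^ p * P x y

/-- `W_p^p(α,β)`: the optimal transport cost with ground cost `d^p` between
finitely supported probability measures. -/
noncomputable def Wpp (p : ℝ) (α β : FinProb X) : ℝ :=
  sInf {c : ℝ | ∃ P : X → X → ℝ, IsCoupling α β P ∧ c = transportCost p P}

/-- The latent optimal transport cost with (at most) `k` anchors on each side:
`OT^L(μ,ν) = inf { W_p^p(μ,μ_z) + W_p^p(μ_z,ν_z) + W_p^p(ν_z,ν) }`, the infimum
over finitely supported probability measures `μ_z, ν_z` supported on at most
`k` points. -/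
noncomputable def OTL (p : ℝ) (k : ℕ) (μ ν : FinProb X) : ℝ :=
  sInf {c : ℝ | ∃ μz νz : FinProb X,
    μz.finite.toFinset.card ≤ k ∧ νz.finite.toFinset.card ≤ k ∧
    c = Wpp p μ μz + Wpp p μz νz + Wpp p νz ν}

/-- The latent Wasserstein discrepancy `W_p^L := (OT^L)^(1/p)`. -/
noncomputable def WpL (p : ℝ) (k : ℕ) (μ ν : FinProb X) : ℝ :=
  OTL p k μ ν ^ (1 / p)

lemma pow_mean3 {p : ℝ} (hp : 1 ≤ p) {a b c : ℝ} (ha : 0 ≤ a) (hb : 0 ≤ b) (hc : 0 ≤ c) :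
    (a + b + c) ^ p ≤ 3 ^ (p - 1) * (a ^ p + b ^ p + c ^ p) := by
  have key := Real.rpow_arith_mean_le_arith_mean_rpow (Finset.univ : Finset (Fin 3))
    ![1/3, 1/3, 1/3] ![a, b, c] (by intro i _; fin_cases i <;> norm_num)
    (by simp [Fin.sum_univ_three]; norm_num) (by intro i _; fin_cases i <;> assumption) hp
  simp only [Fin.sum_univ_three, Matrix.cons_val_zero, Matrix.cons_val_one, Matrix.head_cons,
    Matrix.cons_val_two, Matrix.tail_cons] at key
  have key2 : ((a + b + c) / 3) ^ p ≤ (a ^ p + b ^ p + c ^ p) / 3 := by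
    rw [show (a+b+c)/3 = 1/3*a+1/3*b+1/3*c by ring,
      show (a^p+b^p+c^p)/3 = 1/3*a^p+1/3*b^p+1/3*c^p by ring]
    exact key
  calc (a + b + c) ^ p = (3:ℝ) ^ p * ((a + b + c) / 3) ^ p := by
        rw [← Real.mul_rpow (by norm_num) (by positivity)]
        congr 1; ring
    _ ≤ (3:ℝ) ^ p * ((a ^ p + b ^ p + c ^ p) / 3) :=
        mul_le_mul_of_nonneg_left key2 (Real.rpow_nonneg (by norm_num) p)
    _ = 3 ^ (p - 1) * (a ^ p + b ^ p + c ^ p) := by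
        rw [Real.rpow_sub (by norm_num), Real.rpow_one]
        ring

lemma row_fin {P : X → X → ℝ} (h : (Function.support (Function.uncurry P)).Finite) (x : X) :
    (Function.support (P x)).Finite := by
  apply (h.image Prod.snd).subset
  intro y hy
  exact ⟨(x, y), hy, rfl⟩

lemma col_fin {P : X → X → ℝ} (h : (Function.support (Function.uncurry P)).Finite) (y : X) :
    (Function.support (fun x => P x y)).Finite := by
  apply (h.image Prod.fst).subset
  intro x hx
  exact ⟨(x, y), hx, rfl⟩

lemma col_zero {α β : FinProb X} {P : X → X → ℝ} (hP : IsCoupling α β P) {y : X}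
    (hy : β.w y = 0) (x : X) : P x y = 0 := by
  have h1 : P x y ≤ ∑ᶠ x', P x' y :=
    single_le_finsum x (col_fin hP.2.1 y) (fun x' => hP.1 x' y)
  rw [hP.2.2.2 y, hy] at h1
  exact le_antisymm h1 (hP.1 x y)

lemma row_zero {α β : FinProb X} {P : X → X → ℝ} (hP : IsCoupling α β P) {x : X}
    (hx : α.w x = 0) (y : X) : P x y = 0 := by
  have h1 : P x y ≤ ∑ᶠ y', P x y' :=
    single_le_finsum y (row_fin hP.2.1 x) (fun y' => hP.1 x y')
  rw [hP.2.2.1 x, hx] at h1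
  exact le_antisymm h1 (hP.1 x y)

lemma finsum_row_eq {P : X → X → ℝ} {s : Finset X} (hs : ∀ a b, P a b ≠ 0 → b ∈ s) (x : X) :
    ∑ᶠ y, P x y = ∑ y ∈ s, P x y :=
  finsum_eq_sum_of_support_subset _ (fun y hy => hs x y hy)

lemma finsum_col_eq {P : X → X → ℝ} {s : Finset X} (hs : ∀ a b, P a b ≠ 0 → a ∈ s) (y : X) :
    ∑ᶠ x, P x y = ∑ x ∈ s, P x y :=
  finsum_eq_sum_of_support_subset _ (fun x hx => hs x y hx)

lemma cost_eq_sum {p : ℝ} {P : X → X → ℝ} {s : Finset X}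
    (h : ∀ a b, P a b ≠ 0 → a ∈ s ∧ b ∈ s) :
    transportCost p P = ∑ x ∈ s, ∑ y ∈ s, dist x y ^ p * P x y := by
  have inner : ∀ x, ∑ᶠ y, dist x y ^ p * P x y = ∑ y ∈ s, dist x y ^ p * P x y := by
    intro x
    apply finsum_eq_sum_of_support_subset
    intro y hy
    have hy' : P x y ≠ 0 := by
      intro h0
      apply hy
      simp [h0]
    exact (h x y hy').2
  calc transportCost p P = ∑ᶠ x, ∑ y ∈ s, dist x y ^ p * P x y := finsum_congr inner
    _ = ∑ x ∈ s, ∑ y ∈ s, dist x y ^ p * P x y := by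
        apply finsum_eq_sum_of_support_subset
        intro x hx
        by_contra hxs
        apply hx
        apply Finset.sum_eq_zero
        intro y _
        rcases eq_or_ne (P x y) 0 with h0 | h0
        · rw [h0, mul_zero]
        · exact absurd (h x y h0).1 hxs

lemma cost_nonneg {p : ℝ} {P : X → X → ℝ} (hP : ∀ x y, 0 ≤ P x y) :
    0 ≤ transportCost p P := by
  apply finsum_nonneg
  intro x
  apply finsum_nonneg
  intro y
  exact mul_nonneg (Real.rpow_nonneg dist_nonneg p) (hP x y)

lemma prod_coupling (α β : FinProb X) : IsCoupling α β (fun x y => α.w x * β.w y) := by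
  refine ⟨fun x y => mul_nonneg (α.nonneg x) (β.nonneg y), ?_, ?_, ?_⟩
  · apply (α.finite.prod β.finite).subset
    rintro ⟨x, y⟩ h
    have h' : α.w x * β.w y ≠ 0 := h
    exact ⟨fun h0 => h' (by rw [h0, zero_mul]), fun h0 => h' (by rw [h0, mul_zero])⟩
  · intro x
    rw [← mul_finsum _ _, β.total, mul_one]
  · intro y
    rw [← finsum_mul _ _, α.total, one_mul]

lemma Wpp_nonempty (p : ℝ) (α β : FinProb X) :
    {c : ℝ | ∃ P : X → X → ℝ, IsCoupling α β P ∧ c = transportCost p P}.Nonempty :=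
  ⟨_, _, prod_coupling α β, rfl⟩

lemma Wpp_bdd (p : ℝ) (α β : FinProb X) :
    BddBelow {c : ℝ | ∃ P : X → X → ℝ, IsCoupling α β P ∧ c = transportCost p P} := by
  refine ⟨0, ?_⟩
  rintro c ⟨P, hP, rfl⟩
  exact cost_nonneg hP.1

lemma Wpp_nonneg (p : ℝ) (α β : FinProb X) : 0 ≤ Wpp p α β := by
  apply Real.sInf_nonneg
  rintro c ⟨P, hP, rfl⟩
  exact cost_nonneg hP.1

lemma glue {p : ℝ} (hp : 1 ≤ p) (μ ν μz νz : FinProb X) {P1 P2 P3 : X → X → ℝ}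
    (h1 : IsCoupling μ μz P1) (h2 : IsCoupling μz νz P2) (h3 : IsCoupling νz ν P3) :
    Wpp p μ ν ≤
      3 ^ (p - 1) * (transportCost p P1 + transportCost p P2 + transportCost p P3) := by
  classical
  set s : Finset X :=
    (h1.2.1.toFinset.image Prod.fst) ∪ (h1.2.1.toFinset.image Prod.snd) ∪
    (h2.2.1.toFinset.image Prod.fst) ∪ (h2.2.1.toFinset.image Prod.snd) ∪
    (h3.2.1.toFinset.image Prod.fst) ∪ (h3.2.1.toFinset.image Prod.snd) with hs
  have mem_of : ∀ {P : X → X → ℝ} (hf : (Function.support (Function.uncurry P)).Finite)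
      {a b : X}, P a b ≠ 0 →
      a ∈ hf.toFinset.image Prod.fst ∧ b ∈ hf.toFinset.image Prod.snd := by
    intro P hf a b hab
    have hm : (a, b) ∈ hf.toFinset := by
      rw [Set.Finite.mem_toFinset]
      exact hab
    exact ⟨Finset.mem_image.2 ⟨(a, b), hm, rfl⟩, Finset.mem_image.2 ⟨(a, b), hm, rfl⟩⟩
  have m1 : ∀ a b, P1 a b ≠ 0 → a ∈ s ∧ b ∈ s := by
    intro a b hab
    obtain ⟨ha, hb⟩ := mem_of h1.2.1 hab
    constructor <;> · rw [hs]; simp only [Finset.mem_union]; tauto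
  have m2 : ∀ a b, P2 a b ≠ 0 → a ∈ s ∧ b ∈ s := by
    intro a b hab
    obtain ⟨ha, hb⟩ := mem_of h2.2.1 hab
    constructor <;> · rw [hs]; simp only [Finset.mem_union]; tauto
  have m3 : ∀ a b, P3 a b ≠ 0 → a ∈ s ∧ b ∈ s := by
    intro a b hab
    obtain ⟨ha, hb⟩ := mem_of h3.2.1 hab
    constructor <;> · rw [hs]; simp only [Finset.mem_union]; tauto
  -- zero lemmas
  have z1 : ∀ x z, μz.w z = 0 → P1 x z = 0 := fun x z h => col_zero h1 h x
  have z2a : ∀ z w, μz.w z = 0 → P2 z w = 0 := fun z w h => row_zero h2 h w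
  have z2b : ∀ z w, νz.w w = 0 → P2 z w = 0 := fun z w h => col_zero h2 h z
  have z3 : ∀ w y, νz.w w = 0 → P3 w y = 0 := fun w y h => row_zero h3 h y
  -- marginals as finset sums
  have r1 : ∀ x, ∑ z ∈ s, P1 x z = μ.w x := fun x => by
    rw [← finsum_row_eq (fun a b h => (m1 a b h).2), h1.2.2.1]
  have c1 : ∀ z, ∑ x ∈ s, P1 x z = μz.w z := fun z => by
    rw [← finsum_col_eq (fun a b h => (m1 a b h).1), h1.2.2.2]
  have r2 : ∀ z, ∑ w ∈ s, P2 z w = μz.w z := fun z => by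
    rw [← finsum_row_eq (fun a b h => (m2 a b h).2), h2.2.2.1]
  have c2 : ∀ w, ∑ z ∈ s, P2 z w = νz.w w := fun w => by
    rw [← finsum_col_eq (fun a b h => (m2 a b h).1), h2.2.2.2]
  have r3 : ∀ w, ∑ y ∈ s, P3 w y = νz.w w := fun w => by
    rw [← finsum_row_eq (fun a b h => (m3 a b h).2), h3.2.2.1]
  have c3 : ∀ y, ∑ w ∈ s, P3 w y = ν.w y := fun y => by
    rw [← finsum_col_eq (fun a b h => (m3 a b h).1), h3.2.2.2]
  -- the glued plan
  set Q : X → X → ℝ := fun x y =>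
    ∑ z ∈ s, ∑ w ∈ s, P1 x z / μz.w z * (P2 z w * (P3 w y / νz.w w)) with hQ
  have Tnn : ∀ x z w y, 0 ≤ P1 x z / μz.w z * (P2 z w * (P3 w y / νz.w w)) := by
    intro x z w y
    apply mul_nonneg (div_nonneg (h1.1 x z) (μz.nonneg z))
    exact mul_nonneg (h2.1 z w) (div_nonneg (h3.1 w y) (νz.nonneg w))
  have Qnn : ∀ x y, 0 ≤ Q x y := by
    intro x y
    exact Finset.sum_nonneg fun z _ => Finset.sum_nonneg fun w _ => Tnn x z w y
  have Qsupp : ∀ x y, Q x y ≠ 0 → x ∈ s ∧ y ∈ s := by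
    intro x y h
    have hex : ∃ z ∈ s, ∃ w ∈ s, P1 x z / μz.w z * (P2 z w * (P3 w y / νz.w w)) ≠ 0 := by
      by_contra hcon
      push_neg at hcon
      exact h (Finset.sum_eq_zero fun z hz => Finset.sum_eq_zero fun w hw => hcon z hz w hw)
    obtain ⟨z, -, w, -, ht⟩ := hex
    have hP1 : P1 x z ≠ 0 := fun h0 => ht (by rw [h0]; simp)
    have hP3 : P3 w y ≠ 0 := fun h0 => ht (by rw [h0]; simp)
    exact ⟨(m1 x z hP1).1, (m3 w y hP3).2⟩
  -- pointwise cancellations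
  have e2 : ∀ z w, P2 z w * (νz.w w / νz.w w) = P2 z w := by
    intro z w
    rcases eq_or_ne (νz.w w) 0 with h | h
    · rw [z2b z w h, zero_mul]
    · rw [div_self h, mul_one]
  have e1 : ∀ x z, P1 x z / μz.w z * μz.w z = P1 x z := by
    intro x z
    rcases eq_or_ne (μz.w z) 0 with h | h
    · simp [z1 x z h, h]
    · rw [div_mul_cancel₀ _ h]
  -- Q is a coupling
  have Qfin : (Function.support (Function.uncurry Q)).Finite := by
    apply ((s : Set X).toFinite.prod (s : Set X).toFinite).subset
    rintro ⟨x, y⟩ hxy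
    have := Qsupp x y hxy
    exact ⟨by exact_mod_cast this.1, by exact_mod_cast this.2⟩
  have mar1 : ∀ x, ∑ᶠ y, Q x y = μ.w x := by
    intro x
    rw [finsum_eq_sum_of_support_subset _ (fun y (hy : Q x y ≠ 0) => (Qsupp x y hy).2)]
    calc ∑ y ∈ s, Q x y
        = ∑ z ∈ s, ∑ w ∈ s, P1 x z / μz.w z * (P2 z w * (νz.w w / νz.w w)) := by
          rw [hQ, Finset.sum_comm]
          refine Finset.sum_congr rfl fun z _ => ?_
          rw [Finset.sum_comm]
          refine Finset.sum_congr rfl fun w _ => ?_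
          rw [← Finset.mul_sum, ← Finset.mul_sum, ← Finset.sum_div, r3 w]
      _ = ∑ z ∈ s, ∑ w ∈ s, P1 x z / μz.w z * P2 z w := by
          refine Finset.sum_congr rfl fun z _ => Finset.sum_congr rfl fun w _ => ?_
          rw [e2]
      _ = ∑ z ∈ s, P1 x z := by
          refine Finset.sum_congr rfl fun z _ => ?_
          rw [← Finset.mul_sum, r2 z, e1]
      _ = μ.w x := r1 x
  have mar2 : ∀ y, ∑ᶠ x, Q x y = ν.w y := by
    intro y
    rw [finsum_eq_sum_of_support_subset _ (fun x (hx : Q x y ≠ 0) => (Qsupp x y hx).1)]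
    calc ∑ x ∈ s, Q x y
        = ∑ z ∈ s, ∑ w ∈ s, μz.w z / μz.w z * (P2 z w * (P3 w y / νz.w w)) := by
          rw [hQ, Finset.sum_comm]
          refine Finset.sum_congr rfl fun z _ => ?_
          rw [Finset.sum_comm]
          refine Finset.sum_congr rfl fun w _ => ?_
          rw [← Finset.sum_mul, ← Finset.sum_div, c1 z]
      _ = ∑ z ∈ s, ∑ w ∈ s, P2 z w * (P3 w y / νz.w w) := by
          refine Finset.sum_congr rfl fun z _ => Finset.sum_congr rfl fun w _ => ?_
          rcases eq_or_ne (μz.w z) 0 with h | h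
          · simp [z2a z w h]
          · rw [div_self h, one_mul]
      _ = ∑ w ∈ s, νz.w w * (P3 w y / νz.w w) := by
          rw [Finset.sum_comm]
          refine Finset.sum_congr rfl fun w _ => ?_
          rw [← Finset.sum_mul, c2 w]
      _ = ∑ w ∈ s, P3 w y := by
          refine Finset.sum_congr rfl fun w _ => ?_
          rcases eq_or_ne (νz.w w) 0 with h | h
          · simp [z3 w y h, h]
          · rw [mul_div_cancel₀ _ h]
      _ = ν.w y := c3 y
  have hQcoupling : IsCoupling μ ν Q := ⟨Qnn, Qfin, mar1, mar2⟩
  -- cost of Q as a quadruple sum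
  have costQ : transportCost p Q =
      ∑ x ∈ s, ∑ z ∈ s, ∑ w ∈ s, ∑ y ∈ s,
        dist x y ^ p * (P1 x z / μz.w z * (P2 z w * (P3 w y / νz.w w))) := by
    rw [cost_eq_sum Qsupp]
    refine Finset.sum_congr rfl fun x _ => ?_
    calc ∑ y ∈ s, dist x y ^ p * Q x y
        = ∑ y ∈ s, ∑ z ∈ s, ∑ w ∈ s,
            dist x y ^ p * (P1 x z / μz.w z * (P2 z w * (P3 w y / νz.w w))) := by
          refine Finset.sum_congr rfl fun y _ => ?_
          rw [hQ]
          simp only [Finset.mul_sum]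
      _ = ∑ z ∈ s, ∑ w ∈ s, ∑ y ∈ s,
            dist x y ^ p * (P1 x z / μz.w z * (P2 z w * (P3 w y / νz.w w))) := by
          rw [Finset.sum_comm]
          exact Finset.sum_congr rfl fun z _ => Finset.sum_comm
  -- collapse for the first term
  have hS1 : ∑ x ∈ s, ∑ z ∈ s, ∑ w ∈ s, ∑ y ∈ s,
      dist x z ^ p * (P1 x z / μz.w z * (P2 z w * (P3 w y / νz.w w))) =
      transportCost p P1 := by
    rw [cost_eq_sum (p := p) m1]
    refine Finset.sum_congr rfl fun x _ => Finset.sum_congr rfl fun z _ => ?_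
    calc ∑ w ∈ s, ∑ y ∈ s,
          dist x z ^ p * (P1 x z / μz.w z * (P2 z w * (P3 w y / νz.w w)))
        = ∑ w ∈ s, dist x z ^ p * (P1 x z / μz.w z * P2 z w) := by
          refine Finset.sum_congr rfl fun w _ => ?_
          rw [← Finset.mul_sum, ← Finset.mul_sum, ← Finset.mul_sum, ← Finset.sum_div, r3 w,
            e2 z w]
      _ = dist x z ^ p * P1 x z := by
          rw [← Finset.mul_sum, ← Finset.mul_sum, r2 z, e1]
  -- collapse for the second term
  have hS2 : ∑ x ∈ s, ∑ z ∈ s, ∑ w ∈ s, ∑ y ∈ s,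
      dist z w ^ p * (P1 x z / μz.w z * (P2 z w * (P3 w y / νz.w w))) =
      transportCost p P2 := by
    rw [cost_eq_sum (p := p) m2]
    calc ∑ x ∈ s, ∑ z ∈ s, ∑ w ∈ s, ∑ y ∈ s,
          dist z w ^ p * (P1 x z / μz.w z * (P2 z w * (P3 w y / νz.w w)))
        = ∑ x ∈ s, ∑ z ∈ s, ∑ w ∈ s,
            dist z w ^ p * (P1 x z / μz.w z * P2 z w) := by
          refine Finset.sum_congr rfl fun x _ => Finset.sum_congr rfl fun z _ =>
            Finset.sum_congr rfl fun w _ => ?_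
          rw [← Finset.mul_sum, ← Finset.mul_sum, ← Finset.mul_sum, ← Finset.sum_div, r3 w,
            e2 z w]
      _ = ∑ z ∈ s, ∑ w ∈ s, ∑ x ∈ s,
            dist z w ^ p * (P1 x z / μz.w z * P2 z w) := by
          rw [Finset.sum_comm]
          exact Finset.sum_congr rfl fun z _ => Finset.sum_comm
      _ = ∑ z ∈ s, ∑ w ∈ s, dist z w ^ p * P2 z w := by
          refine Finset.sum_congr rfl fun z _ => Finset.sum_congr rfl fun w _ => ?_
          have ht : ∀ x, dist z w ^ p * (P1 x z / μz.w z * P2 z w) =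
              P1 x z * (dist z w ^ p * P2 z w / μz.w z) := fun x => by ring
          rw [Finset.sum_congr rfl (fun x _ => ht x), ← Finset.sum_mul, c1 z]
          rcases eq_or_ne (μz.w z) 0 with h | h
          · simp [z2a z w h]
          · field_simp
  -- collapse for the third term
  have hS3 : ∑ x ∈ s, ∑ z ∈ s, ∑ w ∈ s, ∑ y ∈ s,
      dist w y ^ p * (P1 x z / μz.w z * (P2 z w * (P3 w y / νz.w w))) =
      transportCost p P3 := by
    rw [cost_eq_sum (p := p) m3]
    calc ∑ x ∈ s, ∑ z ∈ s, ∑ w ∈ s, ∑ y ∈ s,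
          dist w y ^ p * (P1 x z / μz.w z * (P2 z w * (P3 w y / νz.w w)))
        = ∑ z ∈ s, ∑ w ∈ s, ∑ y ∈ s, ∑ x ∈ s,
            dist w y ^ p * (P1 x z / μz.w z * (P2 z w * (P3 w y / νz.w w))) := by
          rw [Finset.sum_comm]
          refine Finset.sum_congr rfl fun z _ => ?_
          rw [Finset.sum_comm]
          exact Finset.sum_congr rfl fun w _ => Finset.sum_comm
      _ = ∑ z ∈ s, ∑ w ∈ s, ∑ y ∈ s,
            dist w y ^ p * (P2 z w * (P3 w y / νz.w w)) := by
          refine Finset.sum_congr rfl fun z _ => Finset.sum_congr rfl fun w _ =>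
            Finset.sum_congr rfl fun y _ => ?_
          have hx : ∀ x, dist w y ^ p * (P1 x z / μz.w z * (P2 z w * (P3 w y / νz.w w))) =
              P1 x z * (dist w y ^ p * (P2 z w * (P3 w y / νz.w w)) / μz.w z) := fun x => by ring
          rw [Finset.sum_congr rfl (fun x _ => hx x), ← Finset.sum_mul, c1 z]
          rcases eq_or_ne (μz.w z) 0 with h | h
          · simp [z2a z w h]
          · rw [mul_comm, div_mul_cancel₀ _ h]
      _ = ∑ w ∈ s, ∑ y ∈ s, ∑ z ∈ s,
            dist w y ^ p * (P2 z w * (P3 w y / νz.w w)) := by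
          rw [Finset.sum_comm]
          exact Finset.sum_congr rfl fun w _ => Finset.sum_comm
      _ = ∑ w ∈ s, ∑ y ∈ s, dist w y ^ p * P3 w y := by
          refine Finset.sum_congr rfl fun w _ => Finset.sum_congr rfl fun y _ => ?_
          have hz' : ∀ z, dist w y ^ p * (P2 z w * (P3 w y / νz.w w)) =
              P2 z w * (dist w y ^ p * P3 w y / νz.w w) := fun z => by ring
          rw [Finset.sum_congr rfl (fun z _ => hz' z), ← Finset.sum_mul, c2 w]
          rcases eq_or_ne (νz.w w) 0 with h | h
          · simp [z3 w y h, h]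
          · field_simp
  -- the pointwise triangle/power bound
  have bound : ∀ x z w y : X, dist x y ^ p ≤
      3 ^ (p - 1) * (dist x z ^ p + dist z w ^ p + dist w y ^ p) := by
    intro x z w y
    refine le_trans (Real.rpow_le_rpow dist_nonneg (dist_triangle4 x z w y)
      (by linarith)) ?_
    exact pow_mean3 hp dist_nonneg dist_nonneg dist_nonneg
  have pull : ∀ f : X → X → X → X → ℝ,
      ∑ x ∈ s, ∑ z ∈ s, ∑ w ∈ s, ∑ y ∈ s, 3 ^ (p - 1) * f x z w y =
      3 ^ (p - 1) * ∑ x ∈ s, ∑ z ∈ s, ∑ w ∈ s, ∑ y ∈ s, f x z w y := by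
    intro f
    simp only [Finset.mul_sum]
  have costbound : transportCost p Q ≤
      3 ^ (p - 1) * (transportCost p P1 + transportCost p P2 + transportCost p P3) := by
    rw [costQ]
    calc ∑ x ∈ s, ∑ z ∈ s, ∑ w ∈ s, ∑ y ∈ s,
          dist x y ^ p * (P1 x z / μz.w z * (P2 z w * (P3 w y / νz.w w)))
        ≤ ∑ x ∈ s, ∑ z ∈ s, ∑ w ∈ s, ∑ y ∈ s, 3 ^ (p - 1) *
          (dist x z ^ p * (P1 x z / μz.w z * (P2 z w * (P3 w y / νz.w w))) +
           (dist z w ^ p * (P1 x z / μz.w z * (P2 z w * (P3 w y / νz.w w))) +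
            dist w y ^ p * (P1 x z / μz.w z * (P2 z w * (P3 w y / νz.w w))))) := by
          refine Finset.sum_le_sum fun x _ => Finset.sum_le_sum fun z _ =>
            Finset.sum_le_sum fun w _ => Finset.sum_le_sum fun y _ => ?_
          have h := mul_le_mul_of_nonneg_right (bound x z w y) (Tnn x z w y)
          calc dist x y ^ p * (P1 x z / μz.w z * (P2 z w * (P3 w y / νz.w w)))
              ≤ 3 ^ (p - 1) * (dist x z ^ p + dist z w ^ p + dist w y ^ p) *
                (P1 x z / μz.w z * (P2 z w * (P3 w y / νz.w w))) := h
            _ = _ := by ring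
      _ = 3 ^ (p - 1) * ∑ x ∈ s, ∑ z ∈ s, ∑ w ∈ s, ∑ y ∈ s,
          (dist x z ^ p * (P1 x z / μz.w z * (P2 z w * (P3 w y / νz.w w))) +
           (dist z w ^ p * (P1 x z / μz.w z * (P2 z w * (P3 w y / νz.w w))) +
            dist w y ^ p * (P1 x z / μz.w z * (P2 z w * (P3 w y / νz.w w))))) := pull _
      _ = 3 ^ (p - 1) * (transportCost p P1 + (transportCost p P2 + transportCost p P3)) := by
          simp only [Finset.sum_add_distrib]
          rw [hS1, hS2, hS3]
      _ = 3 ^ (p - 1) * (transportCost p P1 + transportCost p P2 + transportCost p P3) := by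
          ring
  refine le_trans (csInf_le (Wpp_bdd p μ ν) ⟨Q, hQcoupling, rfl⟩) costbound

open scoped Classical in
noncomputable def dirac (x0 : X) : FinProb X where
  w := fun x => if x = x0 then 1 else 0
  nonneg := fun x => by show 0 ≤ (if x = x0 then (1:ℝ) else 0); split <;> norm_num
  finite := Set.Finite.subset (Set.finite_singleton x0) (by
    intro x hx
    simp only [Function.mem_support] at hx
    by_contra h
    simp only [Set.mem_singleton_iff] at h
    exact hx (if_neg h))
  total := by
    rw [finsum_eq_single _ x0 (fun x hx => if_neg hx)]
    simp

lemma dirac_card (x0 : X) : (dirac (X := X) x0).finite.toFinset.card = 1 := by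
  have : (dirac (X := X) x0).finite.toFinset = {x0} := by
    ext x
    simp only [Set.Finite.mem_toFinset, Function.mem_support, Finset.mem_singleton, dirac]
    constructor
    · intro h
      by_contra hne
      exact h (if_neg hne)
    · intro h
      rw [h]
      simp
  rw [this, Finset.card_singleton]

/-- The Wasserstein cost is bounded by a constant multiple of the latent
optimal transport cost: `W_p^p(μ,ν) ≤ 3^(p−1)·OT^L(μ,ν)`; equivalently
`W_p(μ,ν) ≤ 3^(1−1/p)·W_p^L(μ,ν)`. -/
theorem wasserstein_le_latent (p : ℝ) (hp : 1 ≤ p) (k : ℕ) (hk : 1 ≤ k)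
    (μ ν : FinProb X) :
    Wpp p μ ν ≤ (3 : ℝ) ^ (p - 1) * OTL p k μ ν ∧
    Wpp p μ ν ^ (1 / p) ≤ (3 : ℝ) ^ (1 - 1 / p) * WpL p k μ ν := by
  have hppos : 0 < p := lt_of_lt_of_le one_pos hp
  have hc3 : (0:ℝ) < 3 ^ (p - 1) := Real.rpow_pos_of_pos (by norm_num) _
  -- X is nonempty (μ exists)
  obtain ⟨x0, -⟩ : (Function.support μ.w).Nonempty := by
    rw [Set.nonempty_iff_ne_empty]
    intro h
    have : ∑ᶠ x, μ.w x = 0 := by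
      apply finsum_eq_zero_of_forall_eq_zero
      intro x
      by_contra hx
      exact absurd (Set.eq_empty_iff_forall_notMem.1 h x) (fun hc => hc hx)
    rw [μ.total] at this
    norm_num at this
  -- the OTL defining set is nonempty
  have OTLne : {c : ℝ | ∃ μz νz : FinProb X,
      μz.finite.toFinset.card ≤ k ∧ νz.finite.toFinset.card ≤ k ∧
      c = Wpp p μ μz + Wpp p μz νz + Wpp p νz ν}.Nonempty := by
    refine ⟨_, dirac x0, dirac x0, ?_, ?_, rfl⟩ <;>
      · rw [dirac_card]; exact hk
  -- key estimate against any element of the OTL set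
  have key : ∀ c ∈ {c : ℝ | ∃ μz νz : FinProb X,
      μz.finite.toFinset.card ≤ k ∧ νz.finite.toFinset.card ≤ k ∧
      c = Wpp p μ μz + Wpp p μz νz + Wpp p νz ν},
      Wpp p μ ν ≤ 3 ^ (p - 1) * c := by
    rintro c ⟨μz, νz, -, -, rfl⟩
    have hall : ∀ ε : ℝ, 0 < ε →
        Wpp p μ ν ≤ 3 ^ (p - 1) * (Wpp p μ μz + Wpp p μz νz + Wpp p νz ν) + ε := by
      intro ε hε
      have hδ : 0 < ε / (3 * 3 ^ (p - 1)) := by positivity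
      obtain ⟨a1, ⟨Q1, hQ1, rfl⟩, hlt1⟩ :=
        exists_lt_of_csInf_lt (Wpp_nonempty p μ μz)
          (lt_add_of_pos_right (Wpp p μ μz) hδ)
      obtain ⟨a2, ⟨Q2, hQ2, rfl⟩, hlt2⟩ :=
        exists_lt_of_csInf_lt (Wpp_nonempty p μz νz)
          (lt_add_of_pos_right (Wpp p μz νz) hδ)
      obtain ⟨a3, ⟨Q3, hQ3, rfl⟩, hlt3⟩ :=
        exists_lt_of_csInf_lt (Wpp_nonempty p νz ν)
          (lt_add_of_pos_right (Wpp p νz ν) hδ)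
      have hg := glue hp μ ν μz νz hQ1 hQ2 hQ3
      have hsum : transportCost p Q1 + transportCost p Q2 + transportCost p Q3 ≤
          Wpp p μ μz + Wpp p μz νz + Wpp p νz ν + 3 * (ε / (3 * 3 ^ (p - 1))) := by
        linarith
      calc Wpp p μ ν ≤ 3 ^ (p - 1) *
            (transportCost p Q1 + transportCost p Q2 + transportCost p Q3) := hg
        _ ≤ 3 ^ (p - 1) * (Wpp p μ μz + Wpp p μz νz + Wpp p νz ν +
            3 * (ε / (3 * 3 ^ (p - 1)))) :=
            mul_le_mul_of_nonneg_left hsum hc3.le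
        _ = 3 ^ (p - 1) * (Wpp p μ μz + Wpp p μz νz + Wpp p νz ν) + ε := by
            field_simp
    by_contra hcon
    push_neg at hcon
    have := hall ((Wpp p μ ν - 3 ^ (p - 1) * (Wpp p μ μz + Wpp p μz νz + Wpp p νz ν)) / 2)
      (by linarith)
    linarith
  have part1 : Wpp p μ ν ≤ (3 : ℝ) ^ (p - 1) * OTL p k μ ν := by
    have hdiv : Wpp p μ ν / 3 ^ (p - 1) ≤ OTL p k μ ν := by
      apply le_csInf OTLne
      intro c hc
      rw [div_le_iff₀ hc3]  -- might need div_le_iff₀? check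
      rw [mul_comm]
      exact key c hc
    calc Wpp p μ ν = Wpp p μ ν / 3 ^ (p - 1) * 3 ^ (p - 1) := by
          field_simp
      _ ≤ OTL p k μ ν * 3 ^ (p - 1) := mul_le_mul_of_nonneg_right hdiv hc3.le
      _ = (3 : ℝ) ^ (p - 1) * OTL p k μ ν := mul_comm _ _
  have hOTLnn : 0 ≤ OTL p k μ ν := by
    apply Real.sInf_nonneg
    rintro c ⟨μz, νz, -, -, rfl⟩
    have := Wpp_nonneg p μ μz
    have := Wpp_nonneg p μz νz
    have := Wpp_nonneg p νz ν
    linarith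
  refine ⟨part1, ?_⟩
  calc Wpp p μ ν ^ (1 / p)
      ≤ ((3 : ℝ) ^ (p - 1) * OTL p k μ ν) ^ (1 / p) :=
        Real.rpow_le_rpow (Wpp_nonneg p μ ν) part1 (by positivity)
    _ = ((3 : ℝ) ^ (p - 1)) ^ (1 / p) * OTL p k μ ν ^ (1 / p) :=
        Real.mul_rpow hc3.le hOTLnn
    _ = (3 : ℝ) ^ (1 - 1 / p) * WpL p k μ ν := by
        rw [← Real.rpow_mul (by norm_num : (0:ℝ) ≤ 3)]
        rw [show (p - 1) * (1 / p) = 1 - 1 / p by field_simp]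
        rfl
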